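/- Let n ≥ 1 be an integer, δ > 0 and k ≥ 0 a real number. Let A₀, A₁ ∈ ℝ and B ∈ ℝⁿ, not all zero (i.e. A₀ ≠ 0 or A₁ ≠ 0 or B ≠ 0). Define, for t > 0, F(t) := ∫_{ℝⁿ} |ξ|^{2k} e^{−δ|ξ|²t} [ (−A₀ t |ξ|² + A₁)² cos²(|ξ|t) + (B · ξ/|ξ|)² sin²(|ξ|t) ] dξ. Then there exist constants c > 0, C > 0 and T > 0 such that for all t ≥ T: c t^{−k−n/2} ≤ F(t) ≤ C t^{−k−n/2}. -/

import Mathlib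

open MeasureTheory Filter Real Set Topology

section Aux

lemma aux_x_le {lam : ℝ} (hlam : 0 < lam) (x : ℝ) : x ≤ lam⁻¹ * Real.exp (lam * x) := by
  have h := Real.add_one_le_exp (lam * x)
  rw [inv_mul_eq_div, le_div_iff₀ hlam]
  nlinarith

lemma aux_rpow {p lam : ℝ} (hp : 0 ≤ p) (hlam : 0 < lam) {x : ℝ} (hx : 0 ≤ x) :
    x ^ p ≤ lam ^ (-p) * Real.exp (lam * p * x) := by
  calc x ^ p ≤ (lam⁻¹ * Real.exp (lam * x)) ^ p :=
        Real.rpow_le_rpow hx (aux_x_le hlam x) hp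
    _ = lam ^ (-p) * Real.exp (lam * p * x) := by
        rw [Real.mul_rpow (by positivity) (Real.exp_pos _).le, ← Real.exp_mul,
          Real.rpow_neg hlam.le, Real.inv_rpow hlam.le]
        ring_nf

lemma aux_pow_le {δ : ℝ} (hδ : 0 < δ) {p : ℝ} (hp : 0 ≤ p) :
    ∃ c : ℝ, 0 < c ∧ ∀ r : ℝ, 0 ≤ r → (r ^ 2) ^ p ≤ c * Real.exp (δ / 8 * r ^ 2) := by
  refine ⟨(δ / (8 * (p + 1))) ^ (-p), by positivity, fun r hr => ?_⟩
  have h1 : (r ^ 2) ^ p ≤ (δ / (8 * (p + 1))) ^ (-p) *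
      Real.exp ((δ / (8 * (p + 1))) * p * r ^ 2) := aux_rpow hp (by positivity) (by positivity)
  refine h1.trans ?_
  have h2 : (δ / (8 * (p + 1))) * p ≤ δ / 8 := by
    rw [div_mul_eq_mul_div, div_le_div_iff₀ (by positivity) (by norm_num)]
    nlinarith
  have := Real.exp_le_exp.2 (mul_le_mul_of_nonneg_right h2 (sq_nonneg r))
  exact mul_le_mul_of_nonneg_left this (by positivity)

lemma aux_bound (m : ℕ) {δ k : ℝ} (hδ : 0 < δ) (hk : 0 ≤ k) (A₀ A₁ : ℝ) :
    ∃ M : ℝ, 0 < M ∧ ∀ r : ℝ, 0 ≤ r →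
      r ^ m * (r ^ (2 * k) * Real.exp (-δ * r ^ 2) * (-A₀ * r ^ 2 + A₁) ^ 2) ≤
        M * Real.exp (-(δ / 2) * r ^ 2) := by
  obtain ⟨c₁, hc₁, h₁⟩ := aux_pow_le hδ hk
  obtain ⟨c₂, hc₂, h₂⟩ := aux_pow_le hδ (p := (m : ℝ) / 2) (by positivity)
  obtain ⟨c₃, hc₃, h₃⟩ := aux_pow_le hδ (p := 2) (by norm_num)
  refine ⟨c₂ * (c₁ * (2 * A₀ ^ 2 * c₃ + 2 * A₁ ^ 2 + 1)), by positivity, fun r hr => ?_⟩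
  have e1 : r ^ (2 * k) = (r ^ 2) ^ k := by
    rw [← Real.rpow_natCast r 2, ← Real.rpow_mul hr]
    norm_num
  have e2 : (r : ℝ) ^ m = (r ^ 2) ^ ((m : ℝ) / 2) := by
    rw [← Real.rpow_natCast r 2, ← Real.rpow_mul hr, ← Real.rpow_natCast r m]
    congr 1
    ring
  have e3 : ((r ^ 2 : ℝ)) ^ (2 : ℝ) = (r ^ 2) * (r ^ 2) := by
    rw [show (2:ℝ) = ((2:ℕ):ℝ) by norm_num, Real.rpow_natCast]
    ring
  have hE : (1 : ℝ) ≤ Real.exp (δ / 8 * r ^ 2) := Real.one_le_exp (by positivity)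
  have h3' := h₃ r hr
  rw [e3] at h3'
  have hP : (-A₀ * r ^ 2 + A₁) ^ 2 ≤
      (2 * A₀ ^ 2 * c₃ + 2 * A₁ ^ 2 + 1) * Real.exp (δ / 8 * r ^ 2) := by
    nlinarith [mul_le_mul_of_nonneg_left h3' (sq_nonneg A₀), sq_nonneg (A₀ * r ^ 2 + A₁),
      Real.exp_pos (δ / 8 * r ^ 2), sq_nonneg A₁]
  have t1 : (r : ℝ) ^ m ≤ c₂ * Real.exp (δ / 8 * r ^ 2) := by rw [e2]; exact h₂ r hr
  have t2 : r ^ (2 * k) ≤ c₁ * Real.exp (δ / 8 * r ^ 2) := by rw [e1]; exact h₁ r hr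
  have hprod : (r : ℝ) ^ m * r ^ (2 * k) * (-A₀ * r ^ 2 + A₁) ^ 2 ≤
      (c₂ * Real.exp (δ / 8 * r ^ 2)) * (c₁ * Real.exp (δ / 8 * r ^ 2)) *
        ((2 * A₀ ^ 2 * c₃ + 2 * A₁ ^ 2 + 1) * Real.exp (δ / 8 * r ^ 2)) := by
    have hr2k : (0:ℝ) ≤ r ^ (2 * k) := Real.rpow_nonneg hr _
    have := mul_le_mul t1 t2 hr2k (by positivity)
    exact mul_le_mul this hP (sq_nonneg _) (by positivity)
  calc r ^ m * (r ^ (2 * k) * Real.exp (-δ * r ^ 2) * (-A₀ * r ^ 2 + A₁) ^ 2)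
      = (r ^ m * r ^ (2 * k) * (-A₀ * r ^ 2 + A₁) ^ 2) * Real.exp (-δ * r ^ 2) := by ring
    _ ≤ ((c₂ * Real.exp (δ / 8 * r ^ 2)) * (c₁ * Real.exp (δ / 8 * r ^ 2)) *
        ((2 * A₀ ^ 2 * c₃ + 2 * A₁ ^ 2 + 1) * Real.exp (δ / 8 * r ^ 2))) *
          Real.exp (-δ * r ^ 2) :=
        mul_le_mul_of_nonneg_right hprod (Real.exp_pos _).le
    _ = (c₂ * (c₁ * (2 * A₀ ^ 2 * c₃ + 2 * A₁ ^ 2 + 1))) *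
        Real.exp (δ / 8 * r ^ 2 + δ / 8 * r ^ 2 + δ / 8 * r ^ 2 + -δ * r ^ 2) := by
        rw [Real.exp_add, Real.exp_add, Real.exp_add]
        ring
    _ ≤ _ := by
        refine mul_le_mul_of_nonneg_left (Real.exp_le_exp.2 ?_) (by positivity)
        nlinarith [sq_nonneg r]

lemma aux_RL {u : ℝ → ℝ} (hu : Integrable u) :
    Tendsto (fun s : ℝ => ∫ r : ℝ, u r * Real.cos (2 * r * s)) atTop (𝓝 0) := by
  have h1 : Tendsto (fun w : ℝ => ∫ v : ℝ, Real.fourierChar (-(v * w)) • ((u v : ℂ)))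
      (cocompact ℝ) (𝓝 0) := Real.tendsto_integral_exp_smul_cocompact _
  have h2 : Tendsto (fun s : ℝ => s / π) atTop (cocompact ℝ) := by
    rw [cocompact_eq_atBot_atTop]
    exact (tendsto_id.atTop_div_const Real.pi_pos).mono_right le_sup_right
  have h3 := (Complex.continuous_re.tendsto 0).comp (h1.comp h2)
  simp only [Complex.zero_re] at h3
  refine h3.congr fun s => ?_
  have hint : Integrable (fun v : ℝ => Real.fourierChar (-(v * (s / π))) • ((u v : ℂ))) := by
    have := (fourierIntegral_convergent_iff (f := fun v : ℝ => (u v : ℂ)) (s / π)).2 hu.ofReal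
    simpa [RCLike.inner_apply, mul_comm (s / π)] using this
  rw [Function.comp_apply, Function.comp_apply, ← RCLike.re_to_complex, ← integral_re hint]
  refine integral_congr_ae (.of_forall fun v => ?_)
  simp only [RCLike.re_to_complex]
  rw [Circle.smul_def, Real.fourierChar_apply]
  have : (2 * π * -(v * (s / π))) = -(2 * v * s) := by field_simp
  rw [this]
  rw [smul_eq_mul, Complex.mul_re, Complex.ofReal_im, Complex.ofReal_re,
    Complex.exp_ofReal_mul_I_re]
  simp [Real.cos_neg]
  ring

lemma aux_nontrivial {n : ℕ} (hn : 1 ≤ n) : Nontrivial (EuclideanSpace ℝ (Fin n)) := by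
  refine nontrivial_of_ne (EuclideanSpace.single ⟨0, hn⟩ (1:ℝ)) 0 fun h => ?_
  have := congrArg norm h
  simp [EuclideanSpace.norm_single] at this

lemma aux_polar {n : ℕ} (hn : 1 ≤ n) (G g : EuclideanSpace ℝ (Fin n) → ℝ) (h : ℝ → ℝ)
    (hG : ∀ x : EuclideanSpace ℝ (Fin n), x ≠ 0 → G x = g (‖x‖⁻¹ • x) * h ‖x‖) :
    ∫ x, G x = (∫ ω : Metric.sphere (0 : EuclideanSpace ℝ (Fin n)) 1, g ω
        ∂((volume : Measure (EuclideanSpace ℝ (Fin n))).toSphere)) *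
      ∫ r in Set.Ioi (0:ℝ), r ^ (n - 1) * h r := by
  haveI := aux_nontrivial hn
  let E := EuclideanSpace ℝ (Fin n)
  let μ : Measure E := volume
  show ∫ x, G x ∂μ = _
  calc ∫ x, G x ∂μ = ∫ x, G x ∂(μ.restrict {0}ᶜ) := by
        rw [MeasureTheory.restrict_compl_singleton]
    _ = ∫ x : ({0}ᶜ : Set E), G x.1 ∂(μ.comap Subtype.val) :=
        (integral_subtype_comap (measurableSet_singleton 0).compl _).symm
    _ = ∫ p : Metric.sphere (0:E) 1 × Set.Ioi (0:ℝ), g p.1.1 * h p.2.1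
        ∂(μ.toSphere.prod (Measure.volumeIoiPow (n - 1))) := by
        have key := (Measure.measurePreserving_homeomorphUnitSphereProd μ).integral_comp
            (Homeomorph.measurableEmbedding _)
            (fun p : Metric.sphere (0:E) 1 × Set.Ioi (0:ℝ) => g p.1.1 * h p.2.1)
        rw [finrank_euclideanSpace_fin] at key
        rw [← key]
        refine integral_congr_ae (.of_forall fun x => ?_)
        simp only [homeomorphUnitSphereProd_apply_fst_coe, homeomorphUnitSphereProd_apply_snd_coe]
        exact hG x.1 x.2
    _ = (∫ ω : Metric.sphere (0:E) 1, g ω ∂μ.toSphere) *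
        ∫ r : Set.Ioi (0:ℝ), h r.1 ∂(Measure.volumeIoiPow (n - 1)) :=
        integral_prod_mul (L := ℝ) (fun ω : Metric.sphere (0:E) 1 => g ω.1)
          (fun r : Set.Ioi (0:ℝ) => h r.1)
    _ = (∫ ω : Metric.sphere (0:E) 1, g ω ∂μ.toSphere) *
        ∫ r in Set.Ioi (0:ℝ), r ^ (n-1) * h r := by
        congr 1
        simp only [Measure.volumeIoiPow, ENNReal.ofReal]
        rw [integral_withDensity_eq_integral_smul
          ((measurable_subtype_coe.pow_const _).real_toNNReal)
          (fun r : Set.Ioi (0:ℝ) => h r),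
          integral_subtype_comap measurableSet_Ioi
            (fun r : ℝ => (r ^ (n - 1)).toNNReal • h r)]
        refine setIntegral_congr_fun measurableSet_Ioi fun r hr => ?_
        simp only [NNReal.smul_def, Real.coe_toNNReal _ (pow_nonneg (le_of_lt hr) _), smul_eq_mul]

lemma aux_gauss {n : ℕ} {b : ℝ} (hb : 0 < b) :
    Integrable (fun η : EuclideanSpace ℝ (Fin n) => Real.exp (-b * ‖η‖ ^ 2)) := by
  have h := (GaussianFourier.integrable_cexp_neg_mul_sq_norm_add (V := EuclideanSpace ℝ (Fin n))
    (b := (b : ℂ)) (by simpa using hb) 0 (0 : EuclideanSpace ℝ (Fin n))).norm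
  refine h.congr (ae_of_all _ fun η => ?_)
  show ‖Complex.exp _‖ = _
  rw [show (-(b:ℂ) * ((‖η‖:ℝ):ℂ) ^ 2 +
      0 * ((inner ℝ (0:EuclideanSpace ℝ (Fin n)) η : ℝ) : ℂ)) = ((-b * ‖η‖^2 : ℝ) : ℂ) by
    push_cast; ring]
  rw [Complex.norm_exp, Complex.ofReal_re]

end Aux


section P2
variable {n : ℕ}

lemma aux_meas_wA (δ k A₀ A₁ : ℝ) : Measurable (fun η : EuclideanSpace ℝ (Fin n) =>
    ‖η‖ ^ (2*k) * Real.exp (-δ * ‖η‖^2) * (-A₀*‖η‖^2+A₁)^2) := by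
  fun_prop

lemma aux_meas_wB {k : ℝ} (hk : 0 ≤ k) (δ : ℝ) (B : EuclideanSpace ℝ (Fin n)) :
    Measurable (fun η : EuclideanSpace ℝ (Fin n) =>
    ‖η‖ ^ (2*k) * Real.exp (-δ * ‖η‖^2) * ((inner ℝ B η : ℝ)/‖η‖)^2) := by
  have m1 : Measurable fun η : EuclideanSpace ℝ (Fin n) => (inner ℝ B η : ℝ) :=
    (innerSL ℝ B).continuous.measurable
  have m2 : Measurable fun η : EuclideanSpace ℝ (Fin n) => ‖η‖ ^ (2*k) :=
    ((Real.continuous_rpow_const (by positivity)).comp continuous_norm).measurable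
  exact (m2.mul
    (((measurable_norm.pow_const 2).const_mul (-δ)).exp)).mul
    ((m1.div measurable_norm).pow_const 2)

lemma aux_int_wA {δ k : ℝ} (hδ : 0 < δ) (hk : 0 ≤ k) (A₀ A₁ : ℝ) :
    Integrable (fun η : EuclideanSpace ℝ (Fin n) =>
      ‖η‖ ^ (2*k) * Real.exp (-δ * ‖η‖^2) * (-A₀*‖η‖^2+A₁)^2) := by
  obtain ⟨M, hM, hMb⟩ := aux_bound 0 hδ hk A₀ A₁
  refine ((aux_gauss (n := n) (half_pos hδ)).const_mul M).mono
    (aux_meas_wA δ k A₀ A₁).aestronglyMeasurable (ae_of_all _ fun η => ?_)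
  rw [Real.norm_eq_abs, Real.norm_eq_abs, abs_of_nonneg (by positivity),
    abs_of_nonneg (by positivity)]
  have := hMb ‖η‖ (norm_nonneg η)
  rw [pow_zero, one_mul] at this
  exact this

lemma aux_inner_div_sq_le (B η : EuclideanSpace ℝ (Fin n)) :
    ((inner ℝ B η : ℝ)/‖η‖)^2 ≤ ‖B‖^2 := by
  rcases eq_or_ne η 0 with h | h
  · simp [h]
  · have h1 : |(inner ℝ B η : ℝ)| ≤ ‖B‖ * ‖η‖ := abs_real_inner_le_norm B η
    have h2 : (0:ℝ) < ‖η‖ := norm_pos_iff.2 h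
    rw [div_pow, div_le_iff₀ (by positivity)]
    nlinarith [sq_abs (inner ℝ B η : ℝ), abs_nonneg (inner ℝ B η : ℝ), norm_nonneg B]

lemma aux_int_wB {δ k : ℝ} (hδ : 0 < δ) (hk : 0 ≤ k) (B : EuclideanSpace ℝ (Fin n)) :
    Integrable (fun η : EuclideanSpace ℝ (Fin n) =>
      ‖η‖ ^ (2*k) * Real.exp (-δ * ‖η‖^2) * ((inner ℝ B η : ℝ)/‖η‖)^2) := by
  obtain ⟨M, hM, hMb⟩ := aux_bound 0 hδ hk 0 1
  refine ((aux_gauss (n := n) (half_pos hδ)).const_mul (M * ‖B‖^2)).mono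
    (aux_meas_wB hk δ B).aestronglyMeasurable (ae_of_all _ fun η => ?_)
  rw [Real.norm_eq_abs, Real.norm_eq_abs, abs_of_nonneg (by positivity),
    abs_of_nonneg (by positivity)]
  have h1 := hMb ‖η‖ (norm_nonneg η)
  rw [pow_zero, one_mul] at h1
  have h1' : ‖η‖ ^ (2*k) * Real.exp (-δ * ‖η‖^2) ≤ M * Real.exp (-(δ/2) * ‖η‖^2) := by
    have : (-(0:ℝ) * ‖η‖^2 + 1)^2 = 1 := by norm_num
    calc ‖η‖ ^ (2*k) * Real.exp (-δ * ‖η‖^2)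
        = ‖η‖ ^ (2*k) * Real.exp (-δ * ‖η‖^2) * (-(0:ℝ) * ‖η‖^2 + 1)^2 := by rw [this]; ring
      _ ≤ _ := h1
  calc ‖η‖ ^ (2*k) * Real.exp (-δ * ‖η‖^2) * ((inner ℝ B η : ℝ)/‖η‖)^2
      ≤ (M * Real.exp (-(δ/2) * ‖η‖^2)) * ‖B‖^2 :=
        mul_le_mul h1' (aux_inner_div_sq_le B η) (sq_nonneg _) (by positivity)
    _ = M * ‖B‖^2 * Real.exp (-(δ/2) * ‖η‖^2) := by ring

lemma aux_univ_pos (hn : 1 ≤ n) {Z S : Set (EuclideanSpace ℝ (Fin n))}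
    (hS : volume S = 0) (hZ : volume Z = 0)
    (hcover : ∀ η : EuclideanSpace ℝ (Fin n), η ∈ S ∪ ({0} ∪ Z)) : False := by
  haveI := aux_nontrivial hn
  have h1 : volume (univ : Set (EuclideanSpace ℝ (Fin n))) = 0 := by
    refine le_antisymm ?_ zero_le
    calc volume (univ : Set (EuclideanSpace ℝ (Fin n))) ≤ volume (S ∪ ({0} ∪ Z)) :=
          measure_mono fun η _ => hcover η
      _ ≤ volume S + volume ({0} ∪ Z) := measure_union_le _ _
      _ ≤ volume S + (volume ({0} : Set (EuclideanSpace ℝ (Fin n))) + volume Z) :=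
          add_le_add le_rfl (measure_union_le _ _)
      _ = 0 := by rw [hS, hZ, measure_singleton]; simp
  exact absurd h1 (isOpen_univ.measure_pos volume ⟨0, trivial⟩).ne'

lemma aux_pos_wA (hn : 1 ≤ n) {δ k : ℝ} (hδ : 0 < δ) (hk : 0 ≤ k) {A₀ A₁ : ℝ}
    (hA : A₀ ≠ 0 ∨ A₁ ≠ 0) :
    0 < ∫ η : EuclideanSpace ℝ (Fin n),
      ‖η‖ ^ (2*k) * Real.exp (-δ * ‖η‖^2) * (-A₀*‖η‖^2+A₁)^2 := by
  haveI := aux_nontrivial hn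
  rw [integral_pos_iff_support_of_nonneg (fun η => by positivity) (aux_int_wA hδ hk A₀ A₁)]
  by_contra h0
  rw [not_lt, le_zero_iff] at h0
  have hZ : volume {η : EuclideanSpace ℝ (Fin n) | -A₀*‖η‖^2+A₁ = 0} = 0 := by
    rcases eq_or_ne A₀ 0 with h | h
    · have hA₁ : A₁ ≠ 0 := by rcases hA with h' | h'; exacts [absurd h h', h']
      have : {η : EuclideanSpace ℝ (Fin n) | -A₀*‖η‖^2+A₁ = 0} = ∅ := by
        ext η; simp [h, hA₁]
      rw [this]; simp
    · refine measure_mono_null (fun η hη => ?_)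
        (Measure.addHaar_sphere volume 0 (Real.sqrt (A₁/A₀)))
      simp only [Set.mem_setOf_eq] at hη
      have h2 : ‖η‖^2 = A₁ / A₀ := by field_simp; linarith
      rw [mem_sphere_zero_iff_norm, ← h2, Real.sqrt_sq (norm_nonneg η)]
  refine aux_univ_pos hn h0 hZ fun η => ?_
  by_cases hη : ‖η‖ ^ (2*k) * Real.exp (-δ * ‖η‖^2) * (-A₀*‖η‖^2+A₁)^2 = 0
  · rcases mul_eq_zero.1 hη with h | h
    · rcases mul_eq_zero.1 h with h | h
      · rw [Real.rpow_eq_zero_iff_of_nonneg (norm_nonneg η)] at h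
        exact Or.inr (Or.inl (by simpa using h.1))
      · exact absurd h (Real.exp_ne_zero _)
    · exact Or.inr (Or.inr ((pow_eq_zero_iff (two_ne_zero)).1 h))
  · exact Or.inl hη

lemma aux_pos_wB (hn : 1 ≤ n) {δ k : ℝ} (hδ : 0 < δ) (hk : 0 ≤ k)
    {B : EuclideanSpace ℝ (Fin n)} (hB : B ≠ 0) :
    0 < ∫ η : EuclideanSpace ℝ (Fin n),
      ‖η‖ ^ (2*k) * Real.exp (-δ * ‖η‖^2) * ((inner ℝ B η : ℝ)/‖η‖)^2 := by
  haveI := aux_nontrivial hn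
  rw [integral_pos_iff_support_of_nonneg (fun η => by positivity) (aux_int_wB hδ hk B)]
  by_contra h0
  rw [not_lt, le_zero_iff] at h0
  have hZ : volume {η : EuclideanSpace ℝ (Fin n) | (inner ℝ B η : ℝ) = 0} = 0 := by
    have hset : {η : EuclideanSpace ℝ (Fin n) | (inner ℝ B η : ℝ) = 0}
        = (LinearMap.ker (innerSL ℝ B).toLinearMap : Set (EuclideanSpace ℝ (Fin n))) := by
      ext η
      simp [LinearMap.mem_ker]
    rw [hset]
    refine Measure.addHaar_submodule volume _ fun htop => hB ?_
    have hBmem : B ∈ LinearMap.ker (innerSL ℝ B).toLinearMap := htop ▸ Submodule.mem_top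
    have : (inner ℝ B B : ℝ) = 0 := by simpa [LinearMap.mem_ker] using hBmem
    exact inner_self_eq_zero.1 this
  refine aux_univ_pos hn h0 hZ fun η => ?_
  by_cases hη : ‖η‖ ^ (2*k) * Real.exp (-δ * ‖η‖^2) * ((inner ℝ B η : ℝ)/‖η‖)^2 = 0
  · rcases mul_eq_zero.1 hη with h | h
    · rcases mul_eq_zero.1 h with h | h
      · rw [Real.rpow_eq_zero_iff_of_nonneg (norm_nonneg η)] at h
        exact Or.inr (Or.inl (by simpa using h.1))
      · exact absurd h (Real.exp_ne_zero _)
    · have := (pow_eq_zero_iff (two_ne_zero)).1 h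
      rcases div_eq_zero_iff.1 this with h' | h'
      · exact Or.inr (Or.inr h')
      · exact Or.inr (Or.inl (by simpa using norm_eq_zero.1 h'))
  · exact Or.inl hη

end P2

lemma aux_int_radial {δ k : ℝ} (hδ : 0 < δ) (hk : 0 ≤ k) (A₀ A₁ : ℝ) (m : ℕ) :
    Integrable ((Set.Ioi (0:ℝ)).indicator
      (fun r => r ^ m * (r ^ (2*k) * Real.exp (-δ*r^2) * (-A₀*r^2+A₁)^2))) := by
  obtain ⟨M, hM, hMb⟩ := aux_bound m hδ hk A₀ A₁
  have hmeas : Measurable (fun r : ℝ => r ^ m *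
      (r ^ (2*k) * Real.exp (-δ*r^2) * (-A₀*r^2+A₁)^2)) := by
    have m2 : Measurable fun r : ℝ => r ^ (2*k) :=
      (Real.continuous_rpow_const (by positivity)).measurable
    exact (measurable_id.pow_const m).mul ((m2.mul
      (((measurable_id.pow_const 2).const_mul (-δ)).exp)).mul
      ((((measurable_id.pow_const 2).const_mul (-A₀)).add_const A₁).pow_const 2))
  refine IntegrableOn.integrable_indicator ?_ measurableSet_Ioi
  refine Integrable.mono (((integrable_exp_neg_mul_sq (half_pos hδ)).const_mul M).restrict)
    hmeas.aestronglyMeasurable.restrict ?_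
  filter_upwards [ae_restrict_mem measurableSet_Ioi] with r hr
  have hr0 : (0:ℝ) ≤ r := (mem_Ioi.1 hr).le
  have hnn : (0:ℝ) ≤ r ^ m * (r ^ (2*k) * Real.exp (-δ*r^2) * (-A₀*r^2+A₁)^2) :=
    mul_nonneg (pow_nonneg hr0 m) (mul_nonneg (mul_nonneg (Real.rpow_nonneg hr0 _)
      (Real.exp_pos _).le) (sq_nonneg _))
  rw [Real.norm_eq_abs, Real.norm_eq_abs, abs_of_nonneg hnn, abs_of_nonneg (by positivity)]
  exact hMb r hr0


/-- Two-sided bound for the squared Ḣ^k norm of the second-order approximation ψ^{(2,0)}: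
F(t) = ∫ |ξ|^{2k} e^{−δ|ξ|²t}[(−A₀t|ξ|²+A₁)²cos²(|ξ|t) + (B·ξ/|ξ|)²sin²(|ξ|t)]dξ
satisfies c t^{−k−n/2} ≤ F(t) ≤ C t^{−k−n/2} for large t, provided A₀, A₁, B are not all 0. -/
theorem second_order_approximation_optimal_bounds (n : ℕ) (hn : 1 ≤ n)
    (δ : ℝ) (hδ : 0 < δ) (k : ℝ) (hk : 0 ≤ k)
    (A₀ A₁ : ℝ) (B : EuclideanSpace ℝ (Fin n))
    (hne : A₀ ≠ 0 ∨ A₁ ≠ 0 ∨ B ≠ 0)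
    (F : ℝ → ℝ)
    (hF : ∀ t : ℝ, F t = ∫ ξ : EuclideanSpace ℝ (Fin n),
      ‖ξ‖ ^ (2 * k) * Real.exp (-δ * ‖ξ‖ ^ 2 * t) *
        ((-A₀ * t * ‖ξ‖ ^ 2 + A₁) ^ 2 * Real.cos (‖ξ‖ * t) ^ 2
          + ((inner ℝ B ξ : ℝ) / ‖ξ‖) ^ 2 * Real.sin (‖ξ‖ * t) ^ 2)) :
    ∃ c > (0 : ℝ), ∃ C > (0 : ℝ), ∃ T > (0 : ℝ), ∀ t : ℝ, T ≤ t →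
      c * t ^ (-k - (n : ℝ) / 2) ≤ F t ∧ F t ≤ C * t ^ (-k - (n : ℝ) / 2) := by
  haveI := aux_nontrivial hn
  set wA : EuclideanSpace ℝ (Fin n) → ℝ :=
    fun η => ‖η‖ ^ (2*k) * Real.exp (-δ * ‖η‖^2) * (-A₀*‖η‖^2+A₁)^2 with hwA_def
  set wB : EuclideanSpace ℝ (Fin n) → ℝ :=
    fun η => ‖η‖ ^ (2*k) * Real.exp (-δ * ‖η‖^2) * ((inner ℝ B η : ℝ)/‖η‖)^2 with hwB_def
  have hwA0 : ∀ η, 0 ≤ wA η := fun η => by simp only [hwA_def]; positivity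
  have hwB0 : ∀ η, 0 ≤ wB η := fun η => by simp only [hwB_def]; positivity
  have intA : Integrable wA := aux_int_wA hδ hk A₀ A₁
  have intB : Integrable wB := aux_int_wB hδ hk B
  set G : ℝ → ℝ := fun s => ∫ η : EuclideanSpace ℝ (Fin n),
    (wA η * Real.cos (‖η‖*s)^2 + wB η * Real.sin (‖η‖*s)^2) with hG_def
  set I₀ : ℝ := (∫ η, wA η) + ∫ η, wB η with hI₀_def
  have hbndmul : ∀ (v : EuclideanSpace ℝ (Fin n) → ℝ), Integrable v →
      ∀ (φ : EuclideanSpace ℝ (Fin n) → ℝ), Measurable φ → (∀ x, |φ x| ≤ 1) →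
      Integrable fun η => v η * φ η := by
    intro v hv φ hφ hφ1
    refine hv.mono (hv.aestronglyMeasurable.mul hφ.aestronglyMeasurable)
      (ae_of_all _ fun η => ?_)
    rw [norm_mul]
    calc ‖v η‖ * ‖φ η‖ ≤ ‖v η‖ * 1 :=
          mul_le_mul_of_nonneg_left (by simpa [Real.norm_eq_abs] using hφ1 η) (norm_nonneg _)
      _ = ‖v η‖ := mul_one _
  have mcos2 : ∀ s : ℝ, Measurable fun η : EuclideanSpace ℝ (Fin n) =>
      Real.cos (‖η‖*s)^2 :=
    fun s => ((Real.continuous_cos.comp (continuous_norm.mul continuous_const)).pow 2).measurable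
  have msin2 : ∀ s : ℝ, Measurable fun η : EuclideanSpace ℝ (Fin n) =>
      Real.sin (‖η‖*s)^2 :=
    fun s => ((Real.continuous_sin.comp (continuous_norm.mul continuous_const)).pow 2).measurable
  have mcosd : ∀ s : ℝ, Measurable fun η : EuclideanSpace ℝ (Fin n) =>
      Real.cos (2*(‖η‖*s)) :=
    fun s => (Real.continuous_cos.comp
      (continuous_const.mul (continuous_norm.mul continuous_const))).measurable
  have intAc2 : ∀ s : ℝ, Integrable fun η => wA η * Real.cos (‖η‖*s)^2 :=
    fun s => hbndmul wA intA _ (mcos2 s) fun x => by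
      rw [abs_of_nonneg (sq_nonneg _)]; exact Real.cos_sq_le_one _
  have intBs2 : ∀ s : ℝ, Integrable fun η => wB η * Real.sin (‖η‖*s)^2 :=
    fun s => hbndmul wB intB _ (msin2 s) fun x => by
      rw [abs_of_nonneg (sq_nonneg _)]; exact Real.sin_sq_le_one _
  have intAcd : ∀ s : ℝ, Integrable fun η => wA η * Real.cos (2*(‖η‖*s)) :=
    fun s => hbndmul wA intA _ (mcosd s) fun x => Real.abs_cos_le_one _
  have intBcd : ∀ s : ℝ, Integrable fun η => wB η * Real.cos (2*(‖η‖*s)) :=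
    fun s => hbndmul wB intB _ (mcosd s) fun x => Real.abs_cos_le_one _
  set uA : ℝ → ℝ := (Set.Ioi (0:ℝ)).indicator
    (fun r => r ^ (n-1) * (r ^ (2*k) * Real.exp (-δ*r^2) * (-A₀*r^2+A₁)^2)) with huA_def
  set uB : ℝ → ℝ := (Set.Ioi (0:ℝ)).indicator
    (fun r => r ^ (n-1) * (r ^ (2*k) * Real.exp (-δ*r^2) * (-(0:ℝ)*r^2+1)^2)) with huB_def
  have intuA : Integrable uA := aux_int_radial hδ hk A₀ A₁ (n-1)
  have intuB : Integrable uB := aux_int_radial hδ hk 0 1 (n-1)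
  set σ : ℝ := ∫ ω : Metric.sphere (0 : EuclideanSpace ℝ (Fin n)) 1, (1:ℝ)
    ∂((volume : Measure (EuclideanSpace ℝ (Fin n))).toSphere) with hσ_def
  set SB : ℝ := ∫ ω : Metric.sphere (0 : EuclideanSpace ℝ (Fin n)) 1,
    ((inner ℝ B (ω : EuclideanSpace ℝ (Fin n)) : ℝ))^2
    ∂((volume : Measure (EuclideanSpace ℝ (Fin n))).toSphere) with hSB_def
  have hJA : ∀ s : ℝ, (∫ η, wA η * Real.cos (2*(‖η‖*s)))
      = σ * ∫ r : ℝ, uA r * Real.cos (2*r*s) := by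
    intro s
    rw [aux_polar hn (fun η => wA η * Real.cos (2*(‖η‖*s))) (fun _ => (1:ℝ))
      (fun r => (r ^ (2*k) * Real.exp (-δ*r^2) * (-A₀*r^2+A₁)^2) * Real.cos (2*(r*s)))
      (fun x hx => by simp only [hwA_def, one_mul])]
    congr 1
    rw [← integral_indicator measurableSet_Ioi]
    congr 1
    funext r
    by_cases hr : r ∈ Set.Ioi (0:ℝ)
    · rw [Set.indicator_of_mem hr, huA_def, Set.indicator_of_mem hr,
        show 2*(r*s) = 2*r*s from (mul_assoc 2 r s).symm]
      ring
    · rw [Set.indicator_of_notMem hr, huA_def, Set.indicator_of_notMem hr, zero_mul]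
  have hJB : ∀ s : ℝ, (∫ η, wB η * Real.cos (2*(‖η‖*s)))
      = SB * ∫ r : ℝ, uB r * Real.cos (2*r*s) := by
    intro s
    rw [aux_polar hn (fun η => wB η * Real.cos (2*(‖η‖*s)))
      (fun y => ((inner ℝ B y : ℝ))^2)
      (fun r => (r ^ (2*k) * Real.exp (-δ*r^2) * (-(0:ℝ)*r^2+1)^2) * Real.cos (2*(r*s)))
      (fun x hx => by
        simp only [hwB_def, real_inner_smul_right, ← div_eq_inv_mul]
        ring)]
    congr 1
    rw [← integral_indicator measurableSet_Ioi]
    congr 1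
    funext r
    by_cases hr : r ∈ Set.Ioi (0:ℝ)
    · rw [Set.indicator_of_mem hr, huB_def, Set.indicator_of_mem hr,
        show 2*(r*s) = 2*r*s from (mul_assoc 2 r s).symm]
      ring
    · rw [Set.indicator_of_notMem hr, huB_def, Set.indicator_of_notMem hr, zero_mul]
  -- split of G
  have hGsplit : ∀ s : ℝ, G s = I₀/2 +
      ((σ * ∫ r : ℝ, uA r * Real.cos (2*r*s)) - (SB * ∫ r : ℝ, uB r * Real.cos (2*r*s)))/2 := by
    intro s
    have h1 : ∀ η, wA η * Real.cos (‖η‖*s)^2 + wB η * Real.sin (‖η‖*s)^2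
        = (wA η/2 + (wA η * Real.cos (2*(‖η‖*s)))/2)
          + (wB η/2 - (wB η * Real.cos (2*(‖η‖*s)))/2) := by
      intro η
      rw [Real.sin_sq, Real.cos_sq]
      ring
    have h2 : G s = ∫ η, ((wA η/2 + (wA η * Real.cos (2*(‖η‖*s)))/2)
        + (wB η/2 - (wB η * Real.cos (2*(‖η‖*s)))/2)) := by
      rw [hG_def]
      exact integral_congr_ae (.of_forall h1)
    have hf1 : Integrable (fun η : EuclideanSpace ℝ (Fin n) =>
        wA η/2 + (wA η * Real.cos (2*(‖η‖*s)))/2) :=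
      (intA.div_const 2).add ((intAcd s).div_const 2)
    have hf2 : Integrable (fun η : EuclideanSpace ℝ (Fin n) =>
        wB η/2 - (wB η * Real.cos (2*(‖η‖*s)))/2) :=
      (intB.div_const 2).sub ((intBcd s).div_const 2)
    have ha : (∫ η, (wA η/2 + (wA η * Real.cos (2*(‖η‖*s)))/2
          + (wB η/2 - (wB η * Real.cos (2*(‖η‖*s)))/2)))
        = (∫ η, (wA η/2 + (wA η * Real.cos (2*(‖η‖*s)))/2))
          + ∫ η, (wB η/2 - (wB η * Real.cos (2*(‖η‖*s)))/2) :=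
      integral_add hf1 hf2
    have hb : (∫ η, (wA η/2 + (wA η * Real.cos (2*(‖η‖*s)))/2))
        = (∫ η, wA η)/2 + (∫ η, wA η * Real.cos (2*(‖η‖*s)))/2 := by
      calc (∫ η, (wA η/2 + (wA η * Real.cos (2*(‖η‖*s)))/2))
          = (∫ η, wA η/2) + ∫ η, (wA η * Real.cos (2*(‖η‖*s)))/2 :=
            integral_add (intA.div_const 2) ((intAcd s).div_const 2)
        _ = (∫ η, wA η)/2 + (∫ η, wA η * Real.cos (2*(‖η‖*s)))/2 := by
            rw [integral_div, integral_div]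
    have hc : (∫ η, (wB η/2 - (wB η * Real.cos (2*(‖η‖*s)))/2))
        = (∫ η, wB η)/2 - (∫ η, wB η * Real.cos (2*(‖η‖*s)))/2 := by
      calc (∫ η, (wB η/2 - (wB η * Real.cos (2*(‖η‖*s)))/2))
          = (∫ η, wB η/2) - ∫ η, (wB η * Real.cos (2*(‖η‖*s)))/2 :=
            integral_sub (intB.div_const 2) ((intBcd s).div_const 2)
        _ = (∫ η, wB η)/2 - (∫ η, wB η * Real.cos (2*(‖η‖*s)))/2 := by
            rw [integral_div, integral_div]
    rw [h2, ha, hb, hc, hJA s, hJB s, hI₀_def]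
    ring
  -- limit of G
  have hGlim : Tendsto G atTop (𝓝 (I₀/2)) := by
    have h0 : Tendsto (fun s : ℝ => I₀/2 +
        ((σ * ∫ r : ℝ, uA r * Real.cos (2*r*s)) - (SB * ∫ r : ℝ, uB r * Real.cos (2*r*s)))/2)
        atTop (𝓝 (I₀/2 + ((σ * 0) - (SB * 0))/2)) :=
      tendsto_const_nhds.add ((((aux_RL intuA).const_mul σ).sub
        ((aux_RL intuB).const_mul SB)).div_const 2)
    simp only [mul_zero, sub_zero, zero_div, add_zero] at h0
    exact Tendsto.congr (fun s => (hGsplit s).symm) h0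
  -- upper bound for G
  have hup : ∀ s : ℝ, G s ≤ I₀ := by
    intro s
    have : G s ≤ ∫ η, (wA η + wB η) := by
      rw [hG_def]
      refine integral_mono ((intAc2 s).add (intBs2 s)) (intA.add intB) fun η => ?_
      have c1 : wA η * Real.cos (‖η‖*s)^2 ≤ wA η :=
        mul_le_of_le_one_right (hwA0 η) (Real.cos_sq_le_one _)
      have c2 : wB η * Real.sin (‖η‖*s)^2 ≤ wB η :=
        mul_le_of_le_one_right (hwB0 η) (Real.sin_sq_le_one _)
      exact add_le_add c1 c2
    rwa [integral_add intA intB, ← hI₀_def] at this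
  -- positivity of I₀
  have hI₀pos : 0 < I₀ := by
    have hA0 : (0:ℝ) ≤ ∫ η, wA η := integral_nonneg hwA0
    have hB0 : (0:ℝ) ≤ ∫ η, wB η := integral_nonneg hwB0
    rw [hI₀_def]
    by_cases hA : A₀ ≠ 0 ∨ A₁ ≠ 0
    · have := aux_pos_wA hn hδ hk hA (n := n)
      linarith
    · push_neg at hA
      have hB : B ≠ 0 := by
        rcases hne with h | h | h
        exacts [absurd hA.1 h, absurd hA.2 h, h]
      have := aux_pos_wB hn hδ hk hB
      linarith
  -- scaling identity
  have hscale : ∀ t : ℝ, 0 < t → F t = t ^ (-k - (n:ℝ)/2) * G (Real.sqrt t) := by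
    intro t ht
    have hs : (0:ℝ) < Real.sqrt t := Real.sqrt_pos.2 ht
    have hs2 : Real.sqrt t ^ 2 = t := Real.sq_sqrt ht.le
    have hsr : Real.sqrt t = t ^ ((1:ℝ)/2) := Real.sqrt_eq_rpow t
    rw [hF t]
    have hcomp := Measure.integral_comp_smul (volume : Measure (EuclideanSpace ℝ (Fin n)))
      (fun ξ => ‖ξ‖ ^ (2 * k) * Real.exp (-δ * ‖ξ‖ ^ 2 * t) *
        ((-A₀ * t * ‖ξ‖ ^ 2 + A₁) ^ 2 * Real.cos (‖ξ‖ * t) ^ 2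
          + ((inner ℝ B ξ : ℝ) / ‖ξ‖) ^ 2 * Real.sin (‖ξ‖ * t) ^ 2)) (Real.sqrt t)⁻¹
    rw [finrank_euclideanSpace_fin] at hcomp
    have habs : |(((Real.sqrt t)⁻¹ : ℝ)^n)⁻¹| = Real.sqrt t ^ n := by
      rw [inv_pow, inv_inv, abs_of_pos (pow_pos hs n)]
    rw [habs] at hcomp
    have h2 : (∫ ξ : EuclideanSpace ℝ (Fin n),
        ‖ξ‖ ^ (2 * k) * Real.exp (-δ * ‖ξ‖ ^ 2 * t) *
        ((-A₀ * t * ‖ξ‖ ^ 2 + A₁) ^ 2 * Real.cos (‖ξ‖ * t) ^ 2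
          + ((inner ℝ B ξ : ℝ) / ‖ξ‖) ^ 2 * Real.sin (‖ξ‖ * t) ^ 2))
        = (Real.sqrt t ^ n)⁻¹ * ∫ x : EuclideanSpace ℝ (Fin n),
          (fun ξ => ‖ξ‖ ^ (2 * k) * Real.exp (-δ * ‖ξ‖ ^ 2 * t) *
            ((-A₀ * t * ‖ξ‖ ^ 2 + A₁) ^ 2 * Real.cos (‖ξ‖ * t) ^ 2
              + ((inner ℝ B ξ : ℝ) / ‖ξ‖) ^ 2 * Real.sin (‖ξ‖ * t) ^ 2))
            ((Real.sqrt t)⁻¹ • x) := by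
      rw [hcomp, smul_eq_mul, ← mul_assoc, inv_mul_cancel₀ (pow_pos hs n).ne', one_mul]
    rw [h2]
    have hpt : ∀ x : EuclideanSpace ℝ (Fin n),
        (fun ξ => ‖ξ‖ ^ (2 * k) * Real.exp (-δ * ‖ξ‖ ^ 2 * t) *
            ((-A₀ * t * ‖ξ‖ ^ 2 + A₁) ^ 2 * Real.cos (‖ξ‖ * t) ^ 2
              + ((inner ℝ B ξ : ℝ) / ‖ξ‖) ^ 2 * Real.sin (‖ξ‖ * t) ^ 2))
            ((Real.sqrt t)⁻¹ • x)
        = t ^ (-k) * (wA x * Real.cos (‖x‖ * Real.sqrt t)^2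
            + wB x * Real.sin (‖x‖ * Real.sqrt t)^2) := by
      intro x
      simp only [norm_smul, Real.norm_eq_abs, abs_of_pos (inv_pos.2 hs), real_inner_smul_right]
      have key : ((Real.sqrt t)⁻¹ * ‖x‖)^2 = t⁻¹ * ‖x‖^2 := by
        rw [mul_pow, inv_pow, hs2]
      have e1 : ((Real.sqrt t)⁻¹ * ‖x‖) ^ (2*k) = t ^ (-k) * ‖x‖ ^ (2*k) := by
        rw [Real.mul_rpow (inv_pos.2 hs).le (norm_nonneg x)]
        congr 1
        rw [hsr, ← Real.rpow_neg ht.le, ← Real.rpow_mul ht.le]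
        congr 1
        ring
      have e2 : -δ * (t⁻¹ * ‖x‖^2) * t = -δ * ‖x‖^2 := by
        field_simp
      have e3 : -A₀ * t * (t⁻¹ * ‖x‖^2) + A₁ = -A₀ * ‖x‖^2 + A₁ := by
        field_simp
      have h4 : (Real.sqrt t)⁻¹ * t = Real.sqrt t := by
        rw [inv_mul_eq_div, div_eq_iff hs.ne']
        exact (Real.mul_self_sqrt ht.le).symm
      have e4 : (Real.sqrt t)⁻¹ * ‖x‖ * t = ‖x‖ * Real.sqrt t := by
        rw [mul_comm ((Real.sqrt t)⁻¹) ‖x‖, mul_assoc, h4]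
      have e5 : ((Real.sqrt t)⁻¹ * (inner ℝ B x : ℝ)) / ((Real.sqrt t)⁻¹ * ‖x‖)
          = (inner ℝ B x : ℝ) / ‖x‖ := mul_div_mul_left _ _ (inv_ne_zero hs.ne')
      rw [e1, key, e2, e3, e4, e5]
      simp only [hwA_def, hwB_def]
      ring
    rw [integral_congr_ae (.of_forall hpt), integral_const_mul]
    simp only [hG_def]
    have hsn : ((Real.sqrt t)^n : ℝ)⁻¹ = t ^ (-((n:ℝ)/2)) := by
      rw [hsr, ← Real.rpow_natCast (t ^ ((1:ℝ)/2)) n, ← Real.rpow_mul ht.le,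
        ← Real.rpow_neg ht.le]
      congr 1
      ring
    rw [hsn, ← mul_assoc, ← Real.rpow_add ht]
    have hexp : -((n:ℝ)/2) + -k = -k - (n:ℝ)/2 := by ring
    rw [hexp]
  -- threshold and conclusion
  have hev : ∀ᶠ s in atTop, I₀/4 < G s :=
    hGlim.eventually (eventually_gt_nhds (by linarith))
  obtain ⟨s₀, hs₀⟩ := eventually_atTop.1 hev
  have hs₁pos : (0:ℝ) < max s₀ 1 := lt_of_lt_of_le one_pos (le_max_right _ _)
  refine ⟨I₀/4, by linarith, I₀, hI₀pos, (max s₀ 1)^2, by positivity, fun t ht => ?_⟩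
  have hT1 : (1:ℝ) ≤ (max s₀ 1)^2 := by nlinarith [le_max_right s₀ 1]
  have ht0 : (0:ℝ) < t := lt_of_lt_of_le one_pos (le_trans hT1 ht)
  have hsqrt : s₀ ≤ Real.sqrt t := by
    have h1 : max s₀ 1 ≤ Real.sqrt t := by
      rw [show max s₀ 1 = Real.sqrt ((max s₀ 1)^2) from (Real.sqrt_sq hs₁pos.le).symm]
      exact Real.sqrt_le_sqrt ht
    exact le_trans (le_max_left s₀ 1) h1
  have hGlb := hs₀ (Real.sqrt t) hsqrt
  have hpow : (0:ℝ) < t ^ (-k - (n:ℝ)/2) := Real.rpow_pos_of_pos ht0 _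
  rw [hscale t ht0]
  constructor
  · calc I₀/4 * t^(-k-(n:ℝ)/2) ≤ G (Real.sqrt t) * t^(-k-(n:ℝ)/2) :=
        mul_le_mul_of_nonneg_right hGlb.le hpow.le
      _ = t^(-k-(n:ℝ)/2) * G (Real.sqrt t) := mul_comm _ _
  · calc t^(-k-(n:ℝ)/2) * G (Real.sqrt t) ≤ t^(-k-(n:ℝ)/2) * I₀ :=
        mul_le_mul_of_nonneg_left (hup _) hpow.le
      _ = I₀ * t^(-k-(n:ℝ)/2) := mul_comm _ _
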